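/- For all natural numbers a, b, d, n, p, q with d > 0, the n-th iterate of f_{a,b,d} satisfies f_{a,b,d}^n(p·d^n + q) = p·(a·d)^{μ(q)} + f_{a,b,d}^n(q), where μ(q) = μ_{a,b,d,n}(q) is the number of indices 0 ≤ i < n such that f_{a,b,d}^i(q) is not a multiple of d. -/

import Mathlib

/-- `f a b d m = m / d` if `d ∣ m`, else `a * m + b`. -/
def fabd (a b d : ℕ) : ℕ → ℕ := fun m => if d ∣ m then m / d else a * m + b

/-- `μ a b d n q` counts indices `i < n` with `d ∤ f^[i] q`. -/
def muabd (a b d n q : ℕ) : ℕ :=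
  ((Finset.range n).filter (fun i => ¬ d ∣ (fabd a b d)^[i] q)).card

lemma muabd_succ (a b d n q : ℕ) :
    muabd a b d (n + 1) q =
      muabd a b d n (fabd a b d q) + (if d ∣ q then 0 else 1) := by
  unfold muabd
  rw [Finset.card_filter, Finset.card_filter, Finset.sum_range_succ']
  simp only [Function.iterate_succ_apply, Function.iterate_zero_apply]
  by_cases h : d ∣ q <;> simp [h] <;> exact Finset.sum_congr rfl fun _ _ => by split_ifs <;> simp_all

theorem iterate_fabd_add (a b d n p q : ℕ) (hd : 0 < d) :
    (fabd a b d)^[n] (p * d ^ n + q) =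
      p * (a * d) ^ (muabd a b d n q) + (fabd a b d)^[n] q := by
  induction n generalizing p q with
  | zero => simp [muabd]
  | succ n ih =>
    rw [muabd_succ, Function.iterate_succ_apply, Function.iterate_succ_apply]
    have hdp : d ∣ p * d ^ (n + 1) :=
      Dvd.dvd.mul_left (dvd_pow_self d n.succ_ne_zero) p
    by_cases h : d ∣ q
    · have h1 : d ∣ p * d ^ (n + 1) + q := Dvd.dvd.add hdp h
      have key : p * d ^ (n + 1) + q = (p * d ^ n + q / d) * d := by
        rw [add_mul, Nat.div_mul_cancel h, pow_succ]; ring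
      have hf1 : fabd a b d (p * d ^ (n + 1) + q) = p * d ^ n + q / d := by
        simp only [fabd, key, if_pos (dvd_mul_left d _), Nat.mul_div_cancel _ hd]
      have hf2 : fabd a b d q = q / d := by simp [fabd, h]
      rw [hf1, hf2, ih, if_pos h, add_zero]
    · have h1 : ¬ d ∣ p * d ^ (n + 1) + q := fun hc => h ((Nat.dvd_add_right hdp).mp hc)
      have hf1 : fabd a b d (p * d ^ (n + 1) + q) = (p * (a * d)) * d ^ n + (a * q + b) := by
        simp only [fabd]; rw [if_neg h1, pow_succ]; ring
      have hf2 : fabd a b d q = a * q + b := by simp [fabd, h]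
      rw [hf1, hf2, ih, if_neg h, pow_add]
      ring
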